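/- Let T_N be negative binomial with parameters N ≥ 1 and p ∈ (0,1). Then E[(N/(T_N + N))^2] = p^N · ₃F₂(N, N, N; N+1, N+1; 1-p), where ₃F₂ is the generalized hypergeometric function. -/

import Mathlib

/-- The Pochhammer symbol (rising factorial) `(x)ₙ = x(x+1)⋯(x+n-1)`. -/
noncomputable def poch (x : ℝ) (n : ℕ) : ℝ := ∏ i ∈ Finset.range n, (x + i)

/-- The generalized hypergeometric series `₃F₂(a₁, a₂, a₃; b₁, b₂; z)`. -/
noncomputable def hyp3F2 (a₁ a₂ a₃ b₁ b₂ z : ℝ) : ℝ :=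
  ∑' n : ℕ, poch a₁ n * poch a₂ n * poch a₃ n / (poch b₁ n * poch b₂ n * n.factorial) * z ^ n

lemma poch_succ (x : ℝ) (n : ℕ) : poch x (n + 1) = poch x n * (x + n) := by
  simp [poch, Finset.prod_range_succ]

lemma poch_shift (x : ℝ) (n : ℕ) : x * poch (x + 1) n = poch x n * (x + n) := by
  induction n with
  | zero => simp [poch]
  | succ n ih =>
    rw [poch_succ, poch_succ, ← mul_assoc, ih]
    push_cast
    ring

lemma choose_id (N t : ℕ) (hN : 1 ≤ N) :
    (t + N) * (t + N - 1).choose (N - 1) = (t + 1) * (t + N).choose (N - 1) := by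
  obtain ⟨M, rfl⟩ := Nat.exists_eq_add_of_le hN
  have h1 : t + (1 + M) - 1 = t + M := by omega
  have h2 : 1 + M - 1 = M := by omega
  rw [h1, h2]
  have h3 : (t + M).choose M = (t + M).choose t := by
    have ht : t ≤ t + M := by omega
    rw [← Nat.choose_symm ht]
    congr 1
    omega
  have h4 : (t + (1 + M)).choose M = (t + (1 + M)).choose (t + 1) := by
    have ht : t + 1 ≤ t + (1 + M) := by omega
    rw [← Nat.choose_symm ht]
    congr 1
    omega
  rw [h3, h4]
  have key := Nat.add_one_mul_choose_eq (t + M) t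
  have h5 : t + (1 + M) = t + M + 1 := by omega
  rw [h5, key]
  ring

lemma poch_eq_choose (N : ℕ) (hN : 1 ≤ N) (t : ℕ) :
    poch (N : ℝ) t = ((t + N - 1).choose (N - 1) : ℝ) * t.factorial := by
  induction t with
  | zero => simp [poch, Nat.choose_self]
  | succ t ih =>
    rw [poch_succ, ih]
    have key : ((t + N : ℕ) : ℝ) * ((t + N - 1).choose (N - 1) : ℝ)
        = ((t + 1 : ℕ) : ℝ) * ((t + N).choose (N - 1) : ℝ) := by
      rw [← Nat.cast_mul, ← Nat.cast_mul, choose_id N t hN]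
    have h1 : t + 1 + N - 1 = t + N := by omega
    rw [h1, Nat.factorial_succ]
    push_cast at key ⊢
    linear_combination (t.factorial : ℝ) * key

lemma poch_pos (x : ℝ) (hx : 0 < x) (n : ℕ) : 0 < poch x n := by
  apply Finset.prod_pos
  intro i _
  positivity

/-- Second moment of the ML estimator: for `T_N` negative binomial with
parameters `N ≥ 1` and `p ∈ (0,1)`,
`E[(N/(T_N+N))²] = p^N · ₃F₂(N, N, N; N+1, N+1; 1-p)`. -/
theorem ml_estimator_second_moment (N : ℕ) (hN : 1 ≤ N) (p : ℝ)
    (hp : 0 < p) (hp1 : p < 1) :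
    (∑' t : ℕ, ((N : ℝ) / (t + N)) ^ 2 *
        (((t + N - 1).choose (N - 1) : ℝ) * p ^ N * (1 - p) ^ t))
      = p ^ N * hyp3F2 N N N (N + 1) (N + 1) (1 - p) := by
  rw [hyp3F2, ← tsum_mul_left]
  apply tsum_congr
  intro t
  have hNpos : (0 : ℝ) < N := by exact_mod_cast hN
  have hNt : (0 : ℝ) < (N : ℝ) + t := by positivity
  have hpochN : poch (N : ℝ) t = ((t + N - 1).choose (N - 1) : ℝ) * t.factorial :=
    poch_eq_choose N hN t
  have hshift : (N : ℝ) * poch ((N : ℝ) + 1) t = poch (N : ℝ) t * ((N : ℝ) + t) :=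
    poch_shift _ _
  have hfact : (0 : ℝ) < t.factorial := by exact_mod_cast t.factorial_pos
  have hC : (0 : ℝ) < ((t + N - 1).choose (N - 1) : ℝ) := by
    have : N - 1 ≤ t + N - 1 := by omega
    exact_mod_cast Nat.choose_pos this
  have hp1' : poch ((N : ℝ) + 1) t = poch (N : ℝ) t * ((N : ℝ) + t) / N := by
    field_simp [← hshift]
    exact hshift
  have key : poch (N : ℝ) t * poch (N : ℝ) t * poch (N : ℝ) t /
      (poch ((N : ℝ) + 1) t * poch ((N : ℝ) + 1) t * t.factorial)
      = ((N : ℝ) / (t + N)) ^ 2 * ((t + N - 1).choose (N - 1) : ℝ) := by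
    rw [hp1', hpochN]
    have h1 : (t : ℝ) + N ≠ 0 := by positivity
    have h2 : ((t.factorial : ℝ)) ≠ 0 := hfact.ne'
    have h3 : ((t + N - 1).choose (N - 1) : ℝ) ≠ 0 := hC.ne'
    field_simp
    ring
  rw [key]
  ring
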